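/- Let G : ℝ³ → ℝ³ be a C¹ map on the unit cube Ω̂ = [0,1]³ whose Jacobian determinant x ↦ det(J_G(x)) has gradient bounded in norm by L on Ω̂. Let P ⊆ Ω̂ be a finite set of collocation points with det(J_G(p)) ≥ δ > 0 for all p ∈ P. If the fill distance d(P, Ω̂) = sup_{x ∈ Ω̂} min_{p ∈ P} ‖x − p‖ satisfies d(P, Ω̂) < δ/L, then det(J_G(x)) > 0 for every x ∈ Ω̂. -/

import Mathlib

/-- Fill-distance criterion for positivity of the Jacobian determinant on the
unit cube: if the Jacobian determinant is at least `δ > 0` at a finite set of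
collocation points whose fill distance in the cube is less than `δ / L`, where
`L` bounds the gradient of the Jacobian determinant, then the Jacobian
determinant is positive everywhere on the cube. -/
theorem jacobian_det_pos_of_fill_distance
    (Ω : Set (EuclideanSpace ℝ (Fin 3)))
    (hΩ : Ω = {x : EuclideanSpace ℝ (Fin 3) | ∀ i, x i ∈ Set.Icc (0 : ℝ) 1})
    (G : EuclideanSpace ℝ (Fin 3) → EuclideanSpace ℝ (Fin 3))
    (hG : ContDiff ℝ 1 G)
    (f : EuclideanSpace ℝ (Fin 3) → ℝ)
    (hf : f = fun x => (fderiv ℝ G x).det)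
    (f' : EuclideanSpace ℝ (Fin 3) → (EuclideanSpace ℝ (Fin 3) →L[ℝ] ℝ))
    (L : ℝ) (hLpos : 0 < L)
    (hdiff : ∀ x ∈ Ω, HasFDerivWithinAt f (f' x) Ω x)
    (hL : ∀ x ∈ Ω, ‖f' x‖ ≤ L)
    (P : Finset (EuclideanSpace ℝ (Fin 3)))
    (hPne : P.Nonempty) (hPsub : ↑P ⊆ Ω)
    (δ : ℝ) (hδ : 0 < δ)
    (hPδ : ∀ p ∈ P, δ ≤ f p)
    -- the fill distance `d(P, Ω̂) = sup_{x ∈ Ω̂} min_{p ∈ P} ‖x − p‖` is `< δ / L`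
    (hfill : ∃ r : ℝ, r < δ / L ∧ ∀ x ∈ Ω, ∃ p ∈ P, ‖x - p‖ ≤ r) :
    ∀ x ∈ Ω, 0 < f x := by
  have hconv : Convex ℝ Ω := by
    rw [hΩ]
    have : {x : EuclideanSpace ℝ (Fin 3) | ∀ i, x i ∈ Set.Icc (0 : ℝ) 1}
        = (WithLp.linearEquiv 2 ℝ (Fin 3 → ℝ)).toLinearMap ⁻¹'
          Set.pi Set.univ (fun _ : Fin 3 => Set.Icc (0 : ℝ) 1) := by
      ext x
      constructor
      · intro h i _; exact h i
      · intro h i; exact h i (Set.mem_univ i)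
    rw [this]
    exact (convex_pi fun i _ => convex_Icc (0 : ℝ) 1).linear_preimage _
  intro x hx
  obtain ⟨r, hr, hfill⟩ := hfill
  obtain ⟨p, hp, hpx⟩ := hfill x hx
  have hpΩ : (p : EuclideanSpace ℝ (Fin 3)) ∈ Ω := hPsub hp
  have hlip : ‖f x - f p‖ ≤ L * ‖x - p‖ :=
    hconv.norm_image_sub_le_of_norm_hasFDerivWithin_le hdiff hL hpΩ hx
  have h1 : L * ‖x - p‖ ≤ L * r := by nlinarith [norm_nonneg (x - p)]
  have h2 : L * r < δ := (lt_div_iff₀' hLpos).mp hr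
  have h3 : f p - f x ≤ ‖f x - f p‖ := by
    rw [norm_sub_rev]; exact le_abs_self _
  have := hPδ p hp
  linarith
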